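/- Let 0 < a < b < ∞, let A(a,b) = {z ∈ ℂ : a < |z| < b}, and let d_{ab}(w) = min{b − |w|, |w| − a} for w ∈ A(a,b). Then lim_{n→+∞} [ n² ∫_{A(a,b)} (d_{ab}(w))² |w|^{2n} dV(w) ] / [ ∫_{A(a,b)} |w|^{2n} dV(w) ] = b²/2, where the limit is taken over positive integers n and dV denotes Lebesgue area measure on ℂ. -/

import Mathlib

open MeasureTheory Real Set Filter intervalIntegral

lemma radial_eq (a b : ℝ) (ha : 0 < a) (hab : a < b) (g : ℝ → ℝ) :
    ∫ w in {z : ℂ | a < ‖z‖ ∧ ‖z‖ < b}, g (‖w‖)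
      = (2 * π) * ∫ r in Set.Ioo a b, r * g r := by
  have hS : MeasurableSet {z : ℂ | a < ‖z‖ ∧ ‖z‖ < b} := by
    have : {z : ℂ | a < ‖z‖ ∧ ‖z‖ < b} = (fun z : ℂ => ‖z‖) ⁻¹' Ioo a b := rfl
    rw [this]
    exact measurableSet_Ioo.preimage continuous_norm.measurable
  rw [← MeasureTheory.integral_indicator hS]
  have h1 : (fun w : ℂ => Set.indicator {z : ℂ | a < ‖z‖ ∧ ‖z‖ < b}
      (fun w => g (‖w‖)) w)
      = fun w : ℂ => Set.indicator (Ioo a b) g (‖w‖) := by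
    funext w
    by_cases h : ‖w‖ ∈ Ioo a b
    · rw [Set.indicator_of_mem h, Set.indicator_of_mem]
      exact ⟨h.1, h.2⟩
    · rw [Set.indicator_of_notMem h, Set.indicator_of_notMem]
      exact fun hc => h ⟨hc.1, hc.2⟩
  rw [h1, ← Complex.integral_comp_polarCoord_symm
    (fun z => Set.indicator (Ioo a b) g (‖z‖))]
  have h2 : ∀ p ∈ polarCoord.target,
      p.1 • Set.indicator (Ioo a b) g (‖Complex.polarCoord.symm p‖)
        = (fun r => r * Set.indicator (Ioo a b) g |r|) p.1 * (fun _ : ℝ => (1:ℝ)) p.2 := by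
    intro p hp
    simp [Complex.norm_polarCoord_symm, smul_eq_mul]
  rw [setIntegral_congr_fun (polarCoord.open_target.measurableSet) h2]
  have htarget : polarCoord.target = Set.Ioi (0:ℝ) ×ˢ Set.Ioo (-π) π := rfl
  rw [htarget, Measure.volume_eq_prod, ← Measure.prod_restrict,
    integral_prod_mul (μ := volume.restrict (Ioi (0:ℝ)))
      (ν := volume.restrict (Ioo (-π) π))
      (fun r => r * Set.indicator (Ioo a b) g |r|) (fun _ => (1:ℝ))]
  rw [MeasureTheory.integral_const]
  have hvol : (volume.restrict (Ioo (-π) π)) Set.univ = ENNReal.ofReal (2*π) := by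
    rw [Measure.restrict_apply MeasurableSet.univ, Set.univ_inter, Real.volume_Ioo]
    ring_nf
  rw [measureReal_def, hvol, ENNReal.toReal_ofReal (by positivity), smul_eq_mul, mul_one]
  have h3 : ∀ r ∈ Ioi (0:ℝ), r * Set.indicator (Ioo a b) g |r|
      = Set.indicator (Ioo a b) (fun r => r * g r) r := by
    intro r hr
    rw [abs_of_pos hr]
    by_cases h : r ∈ Ioo a b
    · rw [Set.indicator_of_mem h, Set.indicator_of_mem h]
    · rw [Set.indicator_of_notMem h, Set.indicator_of_notMem h, mul_zero]
  rw [setIntegral_congr_fun measurableSet_Ioi h3, setIntegral_indicator measurableSet_Ioo]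
  have : Ioi (0:ℝ) ∩ Ioo a b = Ioo a b := by
    rw [Set.inter_eq_right]
    exact fun r hr => lt_trans ha hr.1
  rw [this, mul_comm]


lemma Ioo_to_interval (a b : ℝ) (hab : a ≤ b) (f : ℝ → ℝ) :
    ∫ r in Set.Ioo a b, f r = ∫ r in a..b, f r := by
  rw [intervalIntegral.integral_of_le hab, integral_Ioc_eq_integral_Ioo]

lemma den_eq (a b : ℝ) (hab : a ≤ b) (n : ℕ) :
    ∫ r in Set.Ioo a b, r ^ (2*n+1)
      = (b ^ (2*n+2) - a ^ (2*n+2)) / (2*n+2) := by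
  rw [Ioo_to_interval a b hab, integral_pow]
  push_cast
  ring_nf

lemma I_eq (b : ℝ) (n : ℕ) :
    ∫ r in (0:ℝ)..b, (b - r)^2 * r ^ (2*n+1)
      = 2 * b ^ (2*n+4) / ((2*n+2) * (2*n+3) * (2*n+4)) := by
  have hcg : ∀ r ∈ Set.uIcc (0:ℝ) b, (b - r)^2 * r ^ (2*n+1)
      = b^2 * r ^ (2*n+1) - 2*b * r ^ (2*n+2) + r ^ (2*n+3) := by
    intro r _; ring
  rw [intervalIntegral.integral_congr hcg]
  have i1 : IntervalIntegrable (fun r : ℝ => b^2 * r ^ (2*n+1)) volume 0 b := by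
    apply Continuous.intervalIntegrable; continuity
  have i2 : IntervalIntegrable (fun r : ℝ => 2*b * r ^ (2*n+2)) volume 0 b := by
    apply Continuous.intervalIntegrable; continuity
  have i3 : IntervalIntegrable (fun r : ℝ => r ^ (2*n+3)) volume 0 b := by
    apply Continuous.intervalIntegrable; continuity
  rw [intervalIntegral.integral_add (i1.sub i2) i3, intervalIntegral.integral_sub i1 i2,
    intervalIntegral.integral_const_mul, intervalIntegral.integral_const_mul,
    integral_pow, integral_pow, integral_pow]
  have h1 : ((2*n+1 : ℕ) : ℝ) + 1 = 2*n+2 := by push_cast; ring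
  have h2 : ((2*n+2 : ℕ) : ℝ) + 1 = 2*n+3 := by push_cast; ring
  have h3 : ((2*n+3 : ℕ) : ℝ) + 1 = 2*n+4 := by push_cast; ring
  have e1 : (0:ℝ) ^ ((2*n+1) + 1) = 0 := by simp
  have e2 : (0:ℝ) ^ ((2*n+2) + 1) = 0 := by simp
  have e3 : (0:ℝ) ^ ((2*n+3) + 1) = 0 := by simp
  rw [h1, h2, h3, e1, e2, e3]
  have d1 : (2*(n:ℝ)+2) ≠ 0 := by positivity
  have d2 : (2*(n:ℝ)+3) ≠ 0 := by positivity
  have d3 : (2*(n:ℝ)+4) ≠ 0 := by positivity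
  have hb1 : b ^ ((2*n+1)+1) = b ^ (2*n+2) := by norm_num
  have hb2 : b ^ ((2*n+2)+1) = b ^ (2*n+3) := by norm_num
  have hb3 : b ^ ((2*n+3)+1) = b ^ (2*n+4) := by norm_num
  rw [hb1, hb2, hb3]
  have hp2 : b ^ (2*n+3) = b ^ (2*n+2) * b := by rw [pow_succ]
  have hp3 : b ^ (2*n+4) = b ^ (2*n+2) * b^2 := by rw [show 2*n+4 = (2*n+2)+2 by ring, pow_add]
  rw [hp2, hp3]
  field_simp
  ring

lemma cont_intOn {f : ℝ → ℝ} (hf : Continuous f) (x y : ℝ) :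
    IntegrableOn f (Set.Ioo x y) :=
  (hf.continuousOn.integrableOn_Icc).mono_set Set.Ioo_subset_Icc_self

lemma num_upper (a b : ℝ) (ha : 0 < a) (hab : a < b) (n : ℕ) :
    ∫ r in Set.Ioo a b, (min (b-r) (r-a))^2 * r ^ (2*n+1)
      ≤ ∫ r in (0:ℝ)..b, (b - r)^2 * r ^ (2*n+1) := by
  have hb : (0:ℝ) ≤ b := le_of_lt (ha.trans hab)
  have hcont1 : Continuous fun r : ℝ => (min (b-r) (r-a))^2 * r ^ (2*n+1) := by
    apply Continuous.mul _ (by continuity)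
    exact ((continuous_const.sub continuous_id).min (continuous_id.sub continuous_const)).pow 2
  have hcont2 : Continuous fun r : ℝ => (b - r)^2 * r ^ (2*n+1) := by continuity
  have hint2 : IntegrableOn (fun r : ℝ => (b - r)^2 * r ^ (2*n+1)) (Set.Ioo 0 b) :=
    cont_intOn hcont2 _ _
  calc ∫ r in Set.Ioo a b, (min (b-r) (r-a))^2 * r ^ (2*n+1)
      ≤ ∫ r in Set.Ioo a b, (b - r)^2 * r ^ (2*n+1) := by
        apply setIntegral_mono_on (cont_intOn hcont1 _ _)
          (cont_intOn hcont2 _ _) measurableSet_Ioo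
        intro r hr
        have hr0 : (0:ℝ) ≤ r := le_of_lt (lt_trans ha hr.1)
        have h0 : 0 ≤ min (b-r) (r-a) :=
          le_min (by linarith [hr.2]) (by linarith [hr.1])
        have hm : min (b-r) (r-a) ≤ b - r := min_le_left _ _
        have hrpos : (0:ℝ) ≤ r ^ (2*n+1) := by positivity
        exact mul_le_mul_of_nonneg_right (pow_le_pow_left₀ h0 hm 2) hrpos
    _ ≤ ∫ r in Set.Ioo 0 b, (b - r)^2 * r ^ (2*n+1) := by
        apply setIntegral_mono_set hint2
        · filter_upwards [self_mem_ae_restrict measurableSet_Ioo] with r hr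
          have : (0:ℝ) ≤ r := le_of_lt hr.1
          positivity
        · exact HasSubset.Subset.eventuallyLE (fun r hr => ⟨lt_trans ha hr.1, hr.2⟩)
    _ = ∫ r in (0:ℝ)..b, (b - r)^2 * r ^ (2*n+1) := Ioo_to_interval 0 b hb _

lemma num_lower (a b : ℝ) (ha : 0 < a) (hab : a < b) (n : ℕ) :
    (∫ r in (0:ℝ)..b, (b - r)^2 * r ^ (2*n+1)) - b^2 * ((a+b)/2) ^ (2*n+2) / (2*n+2)
      ≤ ∫ r in Set.Ioo a b, (min (b-r) (r-a))^2 * r ^ (2*n+1) := by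
  set c := (a+b)/2 with hc
  have hac : a < c := by rw [hc]; linarith
  have hcb : c < b := by rw [hc]; linarith
  have hc0 : 0 < c := lt_trans ha hac
  have hcont1 : Continuous fun r : ℝ => (min (b-r) (r-a))^2 * r ^ (2*n+1) := by
    apply Continuous.mul _ (by continuity)
    exact ((continuous_const.sub continuous_id).min (continuous_id.sub continuous_const)).pow 2
  have hcont2 : Continuous fun r : ℝ => (b - r)^2 * r ^ (2*n+1) := by continuity
  have key1 : ∫ r in Set.Ioo c b, (b - r)^2 * r ^ (2*n+1)
      ≤ ∫ r in Set.Ioo a b, (min (b-r) (r-a))^2 * r ^ (2*n+1) := by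
    have : ∫ r in Set.Ioo c b, (b - r)^2 * r ^ (2*n+1)
        = ∫ r in Set.Ioo c b, (min (b-r) (r-a))^2 * r ^ (2*n+1) := by
      apply setIntegral_congr_fun measurableSet_Ioo
      intro r hr
      have : min (b-r) (r-a) = b - r := min_eq_left (by
        have := hr.1; rw [hc] at this; linarith)
      show (b - r)^2 * r ^ (2*n+1) = (min (b-r) (r-a))^2 * r ^ (2*n+1)
      rw [this]
    rw [this]
    apply setIntegral_mono_set (cont_intOn hcont1 _ _)
    · filter_upwards [self_mem_ae_restrict measurableSet_Ioo] with r hr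
      have h0 : 0 ≤ min (b-r) (r-a) :=
        le_min (by linarith [hr.2]) (by linarith [hr.1])
      have hr0 : (0:ℝ) ≤ r := le_of_lt (lt_trans ha hr.1)
      positivity
    · exact HasSubset.Subset.eventuallyLE (fun r hr => ⟨lt_trans hac hr.1, hr.2⟩)
  have hsplit : (∫ r in (0:ℝ)..c, (b - r)^2 * r ^ (2*n+1))
      + ∫ r in c..b, (b - r)^2 * r ^ (2*n+1)
      = ∫ r in (0:ℝ)..b, (b - r)^2 * r ^ (2*n+1) :=
    intervalIntegral.integral_add_adjacent_intervals
      (hcont2.intervalIntegrable 0 c) (hcont2.intervalIntegrable c b)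
  have key2 : ∫ r in (0:ℝ)..c, (b - r)^2 * r ^ (2*n+1) ≤ b^2 * c ^ (2*n+2) / (2*n+2) := by
    have h1 : ∫ r in (0:ℝ)..c, (b - r)^2 * r ^ (2*n+1)
        ≤ ∫ r in (0:ℝ)..c, b^2 * r ^ (2*n+1) := by
      apply intervalIntegral.integral_mono_on (le_of_lt hc0)
        (hcont2.intervalIntegrable 0 c)
        ((continuous_const.mul (continuous_pow _)).intervalIntegrable 0 c)
      intro r hr
      have h2 : (b - r)^2 ≤ b^2 := by
        apply pow_le_pow_left₀ (by linarith [hr.2, hcb]) (by linarith [hr.1]) 2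
      have hr0 : (0:ℝ) ≤ r := hr.1
      have : (0:ℝ) ≤ r ^ (2*n+1) := by positivity
      exact mul_le_mul_of_nonneg_right h2 this
    have h2 : ∫ r in (0:ℝ)..c, b^2 * r ^ (2*n+1) = b^2 * c ^ (2*n+2) / (2*n+2) := by
      rw [intervalIntegral.integral_const_mul, integral_pow]
      have : (0:ℝ) ^ ((2*n+1)+1) = 0 := by simp
      rw [this]
      push_cast
      ring_nf
    linarith
  have hIoocb : ∫ r in Set.Ioo c b, (b - r)^2 * r ^ (2*n+1)
      = ∫ r in c..b, (b - r)^2 * r ^ (2*n+1) := Ioo_to_interval c b (le_of_lt hcb) _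
  linarith [key1, key2, hsplit, hIoocb.ge, hIoocb.le]


lemma pow_ratio_tendsto :
    Tendsto (fun n : ℕ => 2*(n:ℝ)^2 / ((2*(n:ℝ)+3)*(2*(n:ℝ)+4))) atTop (nhds (1/2)) := by
  have h : Tendsto (fun n : ℕ => 2 / ((2+3/(n:ℝ))*(2+4/(n:ℝ)))) atTop (nhds (1/2)) := by
    have h3 : Tendsto (fun n : ℕ => 3/(n:ℝ)) atTop (nhds 0) :=
      tendsto_const_div_atTop_nhds_zero_nat 3
    have h4 : Tendsto (fun n : ℕ => 4/(n:ℝ)) atTop (nhds 0) :=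
      tendsto_const_div_atTop_nhds_zero_nat 4
    have : Tendsto (fun n : ℕ => (2+3/(n:ℝ))*(2+4/(n:ℝ))) atTop (nhds ((2+0)*(2+0))) :=
      (tendsto_const_nhds.add h3).mul (tendsto_const_nhds.add h4)
    have := (tendsto_const_nhds (x := (2:ℝ))).div this (by norm_num : ((2:ℝ)+0)*(2+0) ≠ 0)
    convert this using 2
    norm_num
    norm_num
  apply h.congr'
  filter_upwards [eventually_ge_atTop 1] with n hn
  have hn0 : (n:ℝ) ≠ 0 := Nat.cast_ne_zero.mpr (Nat.one_le_iff_ne_zero.mp hn)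
  field_simp

lemma geom_exp_tendsto (q : ℝ) (hq0 : 0 ≤ q) (hq1 : q < 1) :
    Tendsto (fun n : ℕ => q ^ (2*n+2)) atTop (nhds 0) := by
  have hq2 : q^2 < 1 := by nlinarith
  have h : Tendsto (fun n : ℕ => (q^2) ^ n) atTop (nhds 0) :=
    tendsto_pow_atTop_nhds_zero_of_lt_one (by positivity) hq2
  have h2 := h.comp (tendsto_add_atTop_nat 1)
  apply h2.congr
  intro n
  simp only [Function.comp_apply, ← pow_mul]
  congr 1

lemma pow_sq_geom_tendsto (s : ℝ) (hs0 : 0 ≤ s) (hs1 : s < 1) :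
    Tendsto (fun n : ℕ => (n:ℝ)^2 * s ^ (2*n+2)) atTop (nhds 0) := by
  have hs2 : ‖s^2‖ < 1 := by rw [Real.norm_eq_abs, abs_of_nonneg (by positivity)]; nlinarith
  have h : Tendsto (fun n : ℕ => (n:ℝ)^2 * (s^2)^n) atTop (nhds 0) :=
    (summable_pow_mul_geometric_of_norm_lt_one 2 hs2).tendsto_atTop_zero
  have h2 := h.const_mul (s^2)
  rw [mul_zero] at h2
  apply h2.congr
  intro n
  rw [← pow_mul]
  ring

lemma tendsto_upper (a b : ℝ) (ha : 0 < a) (hab : a < b) :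
    Tendsto (fun n : ℕ => (n:ℝ)^2 * (2 * b^(2*n+4) / ((2*(n:ℝ)+2)*(2*(n:ℝ)+3)*(2*(n:ℝ)+4)))
      / ((b^(2*n+2) - a^(2*n+2))/(2*(n:ℝ)+2))) atTop (nhds (b^2/2)) := by
  have hb : 0 < b := ha.trans hab
  set q : ℝ := a/b with hqdef
  have hq0 : 0 ≤ q := by positivity
  have hq1 : q < 1 := (div_lt_one hb).mpr hab
  have hlim : Tendsto (fun n : ℕ => (2*(n:ℝ)^2 / ((2*(n:ℝ)+3)*(2*(n:ℝ)+4))) * b^2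
      / (1 - q^(2*n+2))) atTop (nhds (b^2/2)) := by
    have h1 := (pow_ratio_tendsto.mul (tendsto_const_nhds (x := b^2))).div
      ((tendsto_const_nhds (x := (1:ℝ))).sub (geom_exp_tendsto q hq0 hq1)) (by norm_num)
    rw [show b^2/2 = 1/2 * b^2 / (1-0) by ring]
    exact h1
  apply hlim.congr
  intro n
  have hX : (0:ℝ) < b^(2*n+2) := by positivity
  have hXA : (0:ℝ) < b^(2*n+2) - a^(2*n+2) := by
    have := pow_lt_pow_left₀ hab (le_of_lt ha) (n := 2*n+2) (by omega)
    linarith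
  have hqX : q^(2*n+2) = a^(2*n+2)/b^(2*n+2) := by rw [hqdef, div_pow]
  have h1q : (0:ℝ) < 1 - q^(2*n+2) := by
    rw [hqX]
    have : a^(2*n+2)/b^(2*n+2) < 1 := (div_lt_one hX).mpr (by linarith)
    linarith
  have d2 : (2*(n:ℝ)+2) ≠ 0 := by positivity
  have d3 : (2*(n:ℝ)+3) ≠ 0 := by positivity
  have d4 : (2*(n:ℝ)+4) ≠ 0 := by positivity
  rw [hqX]
  rw [show b^(2*n+4) = b^(2*n+2) * b^2 by rw [← pow_add]]
  field_simp

lemma tendsto_err (a b : ℝ) (ha : 0 < a) (hab : a < b) :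
    Tendsto (fun n : ℕ => (n:ℝ)^2 * (b^2 * ((a+b)/2)^(2*n+2) / (2*(n:ℝ)+2))
      / ((b^(2*n+2) - a^(2*n+2))/(2*(n:ℝ)+2))) atTop (nhds 0) := by
  have hb : 0 < b := ha.trans hab
  set c : ℝ := (a+b)/2 with hcdef
  have hc0 : 0 < c := by rw [hcdef]; linarith
  have hcb : c < b := by rw [hcdef]; linarith
  set s : ℝ := c/b with hsdef
  set q : ℝ := a/b with hqdef
  have hs0 : 0 ≤ s := by positivity
  have hs1 : s < 1 := (div_lt_one hb).mpr hcb
  have hq0 : 0 ≤ q := by positivity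
  have hq1 : q < 1 := (div_lt_one hb).mpr hab
  have hlim : Tendsto (fun n : ℕ => b^2 * ((n:ℝ)^2 * s^(2*n+2)) / (1 - q^(2*n+2)))
      atTop (nhds 0) := by
    have h1 := ((pow_sq_geom_tendsto s hs0 hs1).const_mul (b^2)).div
      ((tendsto_const_nhds (x := (1:ℝ))).sub (geom_exp_tendsto q hq0 hq1)) (by norm_num)
    rw [show (0:ℝ) = b^2 * 0 / (1-0) by ring]
    exact h1
  apply hlim.congr
  intro n
  have hX : (0:ℝ) < b^(2*n+2) := by positivity
  have hXA : (0:ℝ) < b^(2*n+2) - a^(2*n+2) := by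
    have := pow_lt_pow_left₀ hab (le_of_lt ha) (n := 2*n+2) (by omega)
    linarith
  have hqX : q^(2*n+2) = a^(2*n+2)/b^(2*n+2) := by rw [hqdef, div_pow]
  have hsX : s^(2*n+2) = c^(2*n+2)/b^(2*n+2) := by rw [hsdef, div_pow]
  have h1q : (0:ℝ) < 1 - q^(2*n+2) := by
    rw [hqX]
    have : a^(2*n+2)/b^(2*n+2) < 1 := (div_lt_one hX).mpr (by linarith)
    linarith
  have d2 : (2*(n:ℝ)+2) ≠ 0 := by positivity
  rw [hqX, hsX]
  field_simp


/-- For `0 < a < b`,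
`lim_{n→∞} n² ∫_{A(a,b)} (d_{ab}(w))² |w|^{2n} dV / ∫_{A(a,b)} |w|^{2n} dV = b²/2`,
the limit being over positive integers `n`. -/
theorem annulus_distance_weighted_ratio_limit (a b : ℝ) (ha : 0 < a) (hab : a < b) :
    Filter.Tendsto
      (fun n : ℕ =>
        ((n : ℝ) ^ 2 *
            ∫ w in {z : ℂ | a < ‖z‖ ∧ ‖z‖ < b},
              (min (b - ‖w‖) (‖w‖ - a)) ^ 2 * ‖w‖ ^ (2 * n)) /
          ∫ w in {z : ℂ | a < ‖z‖ ∧ ‖z‖ < b}, ‖w‖ ^ (2 * n))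
      Filter.atTop (nhds (b ^ 2 / 2)) := by
  have hb : 0 < b := ha.trans hab
  have hpi : (0:ℝ) < 2 * π := by positivity
  -- per-n radial reductions
  have hnum : ∀ n : ℕ, (∫ w in {z : ℂ | a < ‖z‖ ∧ ‖z‖ < b},
      (min (b - ‖w‖) (‖w‖ - a)) ^ 2 * ‖w‖ ^ (2 * n))
      = 2 * π * ∫ r in Set.Ioo a b, (min (b-r) (r-a))^2 * r ^ (2*n+1) := by
    intro n
    have hfun : (fun r : ℝ => r * ((min (b-r) (r-a))^2 * r^(2*n)))
        = (fun r : ℝ => (min (b-r) (r-a))^2 * r^(2*n+1)) := by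
      funext r; ring
    calc (∫ w in {z : ℂ | a < ‖z‖ ∧ ‖z‖ < b},
          (min (b - ‖w‖) (‖w‖ - a)) ^ 2 * ‖w‖ ^ (2 * n))
        = 2 * π * ∫ r in Set.Ioo a b, r * ((min (b-r) (r-a))^2 * r^(2*n)) :=
          radial_eq a b ha hab (fun r => (min (b-r) (r-a))^2 * r^(2*n))
      _ = 2 * π * ∫ r in Set.Ioo a b, (min (b-r) (r-a))^2 * r ^ (2*n+1) := by rw [hfun]
  have hden : ∀ n : ℕ, (∫ w in {z : ℂ | a < ‖z‖ ∧ ‖z‖ < b},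
      ‖w‖ ^ (2 * n))
      = 2 * π * ((b ^ (2*n+2) - a ^ (2*n+2)) / (2*(n:ℝ)+2)) := by
    intro n
    have hfun : (fun r : ℝ => r * r^(2*n)) = (fun r : ℝ => r ^ (2*n+1)) := by
      funext r; ring
    calc (∫ w in {z : ℂ | a < ‖z‖ ∧ ‖z‖ < b}, ‖w‖ ^ (2 * n))
        = 2 * π * ∫ r in Set.Ioo a b, r * r^(2*n) :=
          radial_eq a b ha hab (fun r => r^(2*n))
      _ = 2 * π * ∫ r in Set.Ioo a b, r ^ (2*n+1) := by rw [hfun]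
      _ = 2 * π * ((b ^ (2*n+2) - a ^ (2*n+2)) / (2*(n:ℝ)+2)) := by
          rw [den_eq a b (le_of_lt hab) n]
  -- the nice form of the ratio
  have hform : ∀ n : ℕ,
      ((n : ℝ) ^ 2 *
          ∫ w in {z : ℂ | a < ‖z‖ ∧ ‖z‖ < b},
            (min (b - ‖w‖) (‖w‖ - a)) ^ 2 * ‖w‖ ^ (2 * n)) /
        (∫ w in {z : ℂ | a < ‖z‖ ∧ ‖z‖ < b}, ‖w‖ ^ (2 * n))
      = ((n : ℝ) ^ 2 * ∫ r in Set.Ioo a b, (min (b-r) (r-a))^2 * r ^ (2*n+1))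
          / ((b ^ (2*n+2) - a ^ (2*n+2)) / (2*(n:ℝ)+2)) := by
    intro n
    rw [hnum n, hden n,
      show (n : ℝ) ^ 2 * (2 * π * ∫ r in Set.Ioo a b, (min (b-r) (r-a))^2 * r ^ (2*n+1))
        = (2*π) * ((n : ℝ) ^ 2 * ∫ r in Set.Ioo a b, (min (b-r) (r-a))^2 * r ^ (2*n+1)) by ring,
      show 2 * π * ((b ^ (2*n+2) - a ^ (2*n+2)) / (2*(n:ℝ)+2))
        = (2*π) * ((b ^ (2*n+2) - a ^ (2*n+2)) / (2*(n:ℝ)+2)) by ring,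
      mul_div_mul_left _ _ (ne_of_gt hpi)]
  -- positivity of the denominator
  have hDpos : ∀ n : ℕ, (0:ℝ) < (b ^ (2*n+2) - a ^ (2*n+2)) / (2*(n:ℝ)+2) := by
    intro n
    have h1 : a ^ (2*n+2) < b ^ (2*n+2) :=
      pow_lt_pow_left₀ hab (le_of_lt ha) (by omega)
    have h2 : (0:ℝ) < 2*(n:ℝ)+2 := by positivity
    exact div_pos (by linarith) h2
  -- squeeze
  have hU := tendsto_upper a b ha hab
  have hE := tendsto_err a b ha hab
  have hL : Tendsto (fun n : ℕ =>
      ((n:ℝ)^2 * (2 * b^(2*n+4) / ((2*(n:ℝ)+2)*(2*(n:ℝ)+3)*(2*(n:ℝ)+4)))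
        / ((b^(2*n+2) - a^(2*n+2))/(2*(n:ℝ)+2)))
      - ((n:ℝ)^2 * (b^2 * ((a+b)/2)^(2*n+2) / (2*(n:ℝ)+2))
        / ((b^(2*n+2) - a^(2*n+2))/(2*(n:ℝ)+2)))) atTop (nhds (b^2/2)) := by
    have := hU.sub hE
    rwa [sub_zero] at this
  have hle_low : ∀ n : ℕ,
      (((n:ℝ)^2 * (2 * b^(2*n+4) / ((2*(n:ℝ)+2)*(2*(n:ℝ)+3)*(2*(n:ℝ)+4)))
        / ((b^(2*n+2) - a^(2*n+2))/(2*(n:ℝ)+2)))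
      - ((n:ℝ)^2 * (b^2 * ((a+b)/2)^(2*n+2) / (2*(n:ℝ)+2))
        / ((b^(2*n+2) - a^(2*n+2))/(2*(n:ℝ)+2))))
      ≤ ((n : ℝ) ^ 2 * ∫ r in Set.Ioo a b, (min (b-r) (r-a))^2 * r ^ (2*n+1))
          / ((b ^ (2*n+2) - a ^ (2*n+2)) / (2*(n:ℝ)+2)) := by
    intro n
    have hNlow := num_lower a b ha hab n
    rw [I_eq b n] at hNlow
    rw [div_sub_div_same, ← mul_sub]
    refine (div_le_div_iff_of_pos_right (hDpos n)).mpr ?_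
    exact mul_le_mul_of_nonneg_left hNlow (sq_nonneg _)
  have hle_up : ∀ n : ℕ,
      ((n : ℝ) ^ 2 * ∫ r in Set.Ioo a b, (min (b-r) (r-a))^2 * r ^ (2*n+1))
          / ((b ^ (2*n+2) - a ^ (2*n+2)) / (2*(n:ℝ)+2))
      ≤ ((n:ℝ)^2 * (2 * b^(2*n+4) / ((2*(n:ℝ)+2)*(2*(n:ℝ)+3)*(2*(n:ℝ)+4)))
        / ((b^(2*n+2) - a^(2*n+2))/(2*(n:ℝ)+2))) := by
    intro n
    have hNup := num_upper a b ha hab n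
    rw [I_eq b n] at hNup
    refine (div_le_div_iff_of_pos_right (hDpos n)).mpr ?_
    exact mul_le_mul_of_nonneg_left hNup (sq_nonneg _)
  have key : Tendsto (fun n : ℕ =>
      ((n : ℝ) ^ 2 * ∫ r in Set.Ioo a b, (min (b-r) (r-a))^2 * r ^ (2*n+1))
        / ((b ^ (2*n+2) - a ^ (2*n+2)) / (2*(n:ℝ)+2))) atTop (nhds (b^2/2)) :=
    tendsto_of_tendsto_of_tendsto_of_le_of_le hL hU hle_low hle_up
  exact (key.congr (fun n => (hform n).symm))
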